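/- For an ideal I on ω, Player I has no winning strategy in the tallness* game with respect to I if and only if for every sequence ⟨X_n : n ∈ ω⟩ of I-positive sets there exists A ∈ I with A ∩ X_n infinite for every n. -/

import Mathlib

open Cardinal

/-- `I` is an ideal on `ω` (containing all finite sets, proper). -/
def IsIdealOmega (I : Set (Set ℕ)) : Prop :=
  (∀ A ∈ I, ∀ B ⊆ A, B ∈ I) ∧ (∀ A ∈ I, ∀ B ∈ I, A ∪ B ∈ I) ∧
  (∀ A : Set ℕ, A.Finite → A ∈ I) ∧ Set.univ ∉ I

/-- Player II wins a play of the tallness* game with respect to `I`. -/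
def TallStarIIWins (I : Set (Set ℕ)) (n : ℕ → ℕ) (i : ℕ → Bool) : Prop :=
  Set.range n ∈ I ∨
    (Set.range n ∉ I ∧ {m | ∃ k, i k = true ∧ n k = m}.Infinite ∧
      {m | ∃ k, i k = true ∧ n k = m} ∈ I)

/-- Player I has a winning strategy in the tallness* game with respect to `I`. -/
def TallStarIWinStrat (I : Set (Set ℕ)) : Prop :=
  ∃ σ : List Bool → ℕ, ∀ i : ℕ → Bool,
    StrictMono (fun k => σ ((List.range k).map i)) ∧
    ¬ TallStarIIWins I (fun k => σ ((List.range k).map i)) i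

namespace Stmt17Aux

/-- index selector hitting every value infinitely often -/
def dd (c : ℕ) : ℕ := (Nat.unpair c).1

/-- Player I's moves when the combinatorial property fails: play the least element of
`X (dd c)` above the previous move, where `c` is the number of `true`s so far.
The list is the reversed list of Player II's answers so far. -/
noncomputable def tau (X : ℕ → Set ℕ) : List Bool → ℕ
  | [] => sInf (X (dd 0))
  | b :: t => sInf {m | m ∈ X (dd ((b :: t).count true)) ∧ tau X t < m}

variable {I : Set (Set ℕ)} {X : ℕ → Set ℕ}

lemma tau_nil_mem (hX : ∀ n, (X n).Infinite) : tau X [] ∈ X (dd 0) := by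
  rw [tau]
  exact Nat.sInf_mem (hX (dd 0)).nonempty

lemma tau_cons_nonempty (hX : ∀ n, (X n).Infinite) (b : Bool) (t : List Bool) :
    {m | m ∈ X (dd ((b :: t).count true)) ∧ tau X t < m}.Nonempty := by
  obtain ⟨m, hm, hlt⟩ := (hX _).exists_gt (tau X t)
  exact ⟨m, hm, hlt⟩

lemma tau_cons_spec (hX : ∀ n, (X n).Infinite) (b : Bool) (t : List Bool) :
    tau X (b :: t) ∈ X (dd ((b :: t).count true)) ∧ tau X t < tau X (b :: t) := by
  rw [tau]
  exact Nat.sInf_mem (tau_cons_nonempty hX b t)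

lemma tau_cons_min (b : Bool) (t : List Bool) {m : ℕ}
    (hm : m ∈ X (dd ((b :: t).count true))) (hlt : tau X t < m) :
    tau X (b :: t) ≤ m := by
  rw [tau]
  exact Nat.sInf_le ⟨hm, hlt⟩

lemma winning (hI : IsIdealOmega I) (hXpos : ∀ n, X n ∉ I)
    (hbad : ∀ A ∈ I, ∃ n, ¬ (A ∩ X n).Infinite) : TallStarIWinStrat I := by
  classical
  obtain ⟨hdown, hunion, hfinI, -⟩ := hI
  have hX : ∀ n, (X n).Infinite := by
    intro n
    by_contra h
    exact hXpos n (hfinI _ (Set.not_infinite.mp h))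
  refine ⟨fun l => tau X l.reverse, fun i => ?_⟩
  set n : ℕ → ℕ := fun k => tau X ((List.range k).map i).reverse with hn
  have hrev : ∀ k, ((List.range (k + 1)).map i).reverse
      = i k :: ((List.range k).map i).reverse := by
    intro k; simp [List.range_succ]
  set ck : ℕ → ℕ := fun k => ((List.range k).map i).count true with hck
  have hcount : ∀ k, (i k :: ((List.range k).map i).reverse).count true = ck (k + 1) := by
    intro k
    rw [← hrev k, List.count_reverse]
  have hmono : StrictMono n := by
    apply strictMono_nat_of_lt_succ
    intro k
    have := (tau_cons_spec hX (i k) (((List.range k).map i).reverse)).2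
    simpa [hn, hrev k] using this
  have hmem : ∀ k, n k ∈ X (dd (ck k)) := by
    intro k
    cases k with
    | zero => simpa [hn, hck] using tau_nil_mem hX
    | succ k =>
      have h1 := (tau_cons_spec hX (i k) (((List.range k).map i).reverse)).1
      rw [hcount k] at h1
      simpa [hn, hrev k] using h1
  have hnsucc : ∀ k, n (k + 1) = tau X (i k :: ((List.range k).map i).reverse) := by
    intro k
    show tau X ((List.range (k + 1)).map i).reverse = _
    rw [hrev k]
  have hmin : ∀ k m, m ∈ X (dd (ck (k + 1))) → n k < m → n (k + 1) ≤ m := by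
    intro k m hm hlt
    have h1 : tau X (i k :: ((List.range k).map i).reverse) ≤ m := by
      apply tau_cons_min
      · rw [hcount k]; exact hm
      · exact hlt
    rw [hnsucc k]
    exact h1
  have hcksucc : ∀ k, ck (k + 1) = ck k + if i k = true then 1 else 0 := by
    intro k
    rcases Bool.eq_false_or_eq_true (i k) with h | h <;>
      simp [hck, List.range_succ, h]
  set p : ℕ → Prop := fun k => i k = true with hp
  have hckcount : ∀ k, ck k = Nat.count p k := by
    intro k
    induction k with
    | zero => simp [hck]
    | succ k ih => rw [hcksucc k, Nat.count_succ, ih]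
  by_cases hfin : {k | i k = true}.Finite
  · -- Player II plays `true` only finitely often
    obtain ⟨K0, hK0⟩ := hfin.bddAbove
    have hfalse : ∀ k, K0 + 1 ≤ k → i k = false := by
      intro k hk
      rcases Bool.eq_false_or_eq_true (i k) with h | h
      · exact absurd (hK0 h) (by omega)
      · exact h
    have hstab : ∀ k, K0 + 1 ≤ k → ck k = ck (K0 + 1) := by
      intro k hk
      induction k, hk using Nat.le_induction with
      | base => rfl
      | succ k hk ih => rw [hcksucc k, hfalse k hk, ih]; simp
    set K := K0 + 1 with hK
    set c₀ := ck K with hc₀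
    have tail : ∀ m, m ∈ X (dd c₀) → n K < m → ∃ k, n k = m := by
      intro m hm hlt
      have hq : ∃ k, m ≤ n k := ⟨m, hmono.le_apply⟩
      have hk0ne : Nat.find hq ≠ 0 := by
        intro h0
        have := Nat.find_spec hq
        rw [h0] at this
        have : m ≤ n K := le_trans this (hmono.monotone (Nat.zero_le K))
        omega
      obtain ⟨k, hkeq⟩ := Nat.exists_eq_succ_of_ne_zero hk0ne
      have hspec : m ≤ n (k + 1) := by
        have h := Nat.find_spec hq
        rwa [hkeq] at h
      have hnk : n k < m := by
        have h := Nat.find_min hq (show k < Nat.find hq by omega)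
        omega
      have hKk : K ≤ k := by
        by_contra h
        push_neg at h
        have : n (k + 1) ≤ n K := hmono.monotone (by omega)
        omega
      have hckk : ck (k + 1) = c₀ := hstab (k + 1) (by omega)
      have : n (k + 1) ≤ m := hmin k m (by rw [hckk]; exact hm) hnk
      exact ⟨k + 1, le_antisymm this hspec⟩
    have hrange : Set.range n ∉ I := by
      intro hr
      have hT : {m | m ∈ X (dd c₀) ∧ n K < m} ⊆ Set.range n := by
        rintro m ⟨hm, hlt⟩
        obtain ⟨k, hk⟩ := tail m hm hlt
        exact ⟨k, hk⟩
      have hTI : {m | m ∈ X (dd c₀) ∧ n K < m} ∈ I := hdown _ hr _ hT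
      have hsm : {m : ℕ | m ≤ n K} ∈ I := hfinI _ (Set.finite_Iic (n K))
      have hsub : X (dd c₀) ⊆ {m | m ∈ X (dd c₀) ∧ n K < m} ∪ {m : ℕ | m ≤ n K} := by
        intro m hm
        by_cases h : n K < m
        · exact Or.inl ⟨hm, h⟩
        · exact Or.inr (show m ≤ n K by omega)
      exact hXpos (dd c₀) (hdown _ (hunion _ hTI _ hsm) _ hsub)
    have hBfin : {m | ∃ k, i k = true ∧ n k = m}.Finite := by
      apply (hfin.image n).subset
      rintro m ⟨k, hk, rfl⟩
      exact ⟨k, hk, rfl⟩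
    refine ⟨hmono, ?_⟩
    rintro (h | ⟨-, h2, -⟩)
    · exact hrange h
    · exact h2 hBfin
  · -- Player II plays `true` infinitely often
    have hpinf : (setOf p).Infinite := hfin
    have hkey : ∀ c, i (Nat.nth p c) = true ∧ n (Nat.nth p c) ∈ X (dd c) := by
      intro c
      have h1 : p (Nat.nth p c) := Nat.nth_mem_of_infinite hpinf c
      have h2 : ck (Nat.nth p c) = c := by
        rw [hckcount, Nat.count_nth_of_infinite hpinf]
      have h3 := hmem (Nat.nth p c)
      rw [h2] at h3
      exact ⟨h1, h3⟩
    have hBXinf : ∀ j, ({m | ∃ k, i k = true ∧ n k = m} ∩ X j).Infinite := by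
      intro j
      apply Set.infinite_of_injective_forall_mem
        (f := fun m : ℕ => n (Nat.nth p (Nat.pair j m)))
      · intro a b hab
        have h1 := hmono.injective hab
        have h2 := Nat.nth_injective hpinf h1
        exact ((Nat.pair_eq_pair.mp h2)).2
      · intro m
        refine ⟨⟨_, (hkey _).1, rfl⟩, ?_⟩
        have := (hkey (Nat.pair j m)).2
        rwa [dd, Nat.unpair_pair] at this
    have hBnotI : {m | ∃ k, i k = true ∧ n k = m} ∉ I := by
      intro h
      obtain ⟨j, hj⟩ := hbad _ h
      exact hj (hBXinf j)
    have hrange : Set.range n ∉ I := by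
      intro h
      obtain ⟨j, hj⟩ := hbad _ h
      apply hj
      apply (hBXinf j).mono
      rintro m ⟨⟨k, -, hkm⟩, hmX⟩
      exact ⟨⟨k, hkm⟩, hmX⟩
    refine ⟨hmono, ?_⟩
    rintro (h | ⟨-, -, h3⟩)
    · exact hrange h
    · exact hBnotI h3

end Stmt17Aux

namespace Stmt17Aux

variable {I : Set (Set ℕ)}

lemma nostrat (hI : IsIdealOmega I)
    (hprop : ∀ X : ℕ → Set ℕ, (∀ n, X n ∉ I) → ∃ A ∈ I, ∀ n, (A ∩ X n).Infinite) :
    ¬ TallStarIWinStrat I := by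
  classical
  obtain ⟨hdown, hunion, hfinI, -⟩ := hI
  rintro ⟨σ, hσ⟩
  -- the answers along a fixed finite play followed by all-`false` answers
  have hlist : ∀ (s : List Bool) (k : ℕ), s.length ≤ k →
      (List.range k).map (fun j => s.getD j false) = s ++ List.replicate (k - s.length) false := by
    intro s k hk
    induction k, hk using Nat.le_induction with
    | base =>
      simp only [Nat.sub_self, List.replicate_zero, List.append_nil]
      apply List.ext_getElem (by simp)
      intro j h1 h2
      simp only [List.getElem_map, List.getElem_range]
      rw [List.getD_eq_getElem]
    | succ k hk ih =>
      rw [List.range_succ, List.map_append, ih]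
      have h1 : k + 1 - s.length = (k - s.length) + 1 := by omega
      rw [h1, List.replicate_succ', ← List.append_assoc]
      have h2 : s.getD k false = false := List.getD_eq_default _ _ hk
      simp only [List.map_cons, List.map_nil, h2]
  -- every "tail" of the strategy tree is I-positive
  have hY : ∀ s : List Bool, Set.range (fun m => σ (s ++ List.replicate m false)) ∉ I := by
    intro s hsI
    apply (hσ (fun j => s.getD j false)).2
    left
    have hsub : Set.range (fun k => σ ((List.range k).map (fun j => s.getD j false))) ⊆
        ((fun k => σ ((List.range k).map (fun j => s.getD j false))) '' (Set.Iio s.length)) ∪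
          Set.range (fun m => σ (s ++ List.replicate m false)) := by
      rintro x ⟨k, rfl⟩
      by_cases hk : k < s.length
      · exact Or.inl ⟨k, hk, rfl⟩
      · refine Or.inr ⟨k - s.length, ?_⟩
        show σ (s ++ List.replicate (k - s.length) false) = _
        rw [← hlist s k (not_lt.mp hk)]
    exact hdown _ (hunion _ (hfinI _ ((Set.finite_Iio _).image _)) _ hsI) _ hsub
  obtain ⟨A, hAI, hA⟩ := hprop
    (fun n => Set.range
      (fun m => σ (((Encodable.decode (α := List Bool) n).getD []) ++ List.replicate m false)))
    (fun n => hY _)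
  have hAs : ∀ s : List Bool, (A ∩ Set.range (fun m => σ (s ++ List.replicate m false))).Infinite := by
    intro s
    have h := hA (Encodable.encode s)
    simp only [Encodable.encodek, Option.getD_some] at h
    exact h
  have hex : ∀ s : List Bool, ∃ m, σ (s ++ List.replicate m false) ∈ A := by
    intro s
    obtain ⟨x, hxA, m, rfl⟩ := (hAs s).nonempty
    exact ⟨m, hxA⟩
  set M : List Bool → ℕ := fun s => Classical.choose (hex s) with hM
  have hMspec : ∀ s : List Bool, σ (s ++ List.replicate (M s) false) ∈ A :=
    fun s => Classical.choose_spec (hex s)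
  -- the sequence of positions: answer `false` until the strategy plays into `A`, then answer `true`
  set S : ℕ → List Bool :=
    fun j => Nat.rec [] (fun _ prev => prev ++ (List.replicate (M prev) false ++ [true])) j with hS
  have hSsucc : ∀ j, S (j + 1) = S j ++ (List.replicate (M (S j)) false ++ [true]) := fun j => rfl
  have hSlensucc : ∀ j, (S (j + 1)).length = (S j).length + M (S j) + 1 := by
    intro j; rw [hSsucc j]; simp; omega
  have hSpre1 : ∀ j, S j <+: S (j + 1) := fun j => ⟨_, (hSsucc j).symm⟩
  have hSprefix : ∀ j j', j ≤ j' → S j <+: S j' := by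
    intro j j' h
    induction j', h using Nat.le_induction with
    | base => exact List.prefix_refl _
    | succ k hk ih => exact ih.trans (hSpre1 k)
  have hSlenle : ∀ j, j ≤ (S j).length := by
    intro j
    induction j with
    | zero => exact Nat.zero_le _
    | succ j ih => rw [hSlensucc j]; omega
  set i : ℕ → Bool := fun k => (S (k + 1)).getD k false with hi
  have hcoh : ∀ j k, k < (S j).length → (S j).getD k false = i k := by
    intro j k hk
    have hk1 : k < (S (k + 1)).length := lt_of_lt_of_le (Nat.lt_succ_self k) (hSlenle (k + 1))
    show _ = (S (k + 1)).getD k false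
    rcases le_total j (k + 1) with h | h
    · rw [List.getD_eq_getElem _ _ hk, List.getD_eq_getElem _ _ hk1,
        (hSprefix j (k + 1) h).getElem hk]
    · rw [List.getD_eq_getElem _ _ hk, List.getD_eq_getElem _ _ hk1,
        (hSprefix (k + 1) j h).getElem hk1]
  have htake : ∀ j k, k ≤ (S j).length → (List.range k).map i = (S j).take k := by
    intro j k hk
    apply List.ext_getElem (by simp [List.length_take]; omega)
    intro l h1 h2
    simp only [List.getElem_map, List.getElem_range, List.getElem_take]
    have hl : l < (S j).length := by
      simp only [List.length_take] at h2
      omega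
    rw [← hcoh j l hl, List.getD_eq_getElem _ _ hl]
  -- the key positions where Player II answers `true`
  set kk : ℕ → ℕ := fun j => (S j).length + M (S j) with hkk
  have hkjlt : ∀ j, kk j < (S (j + 1)).length := by
    intro j
    have h := hSlensucc j
    simp only [hkk]
    omega
  have hmoves : ∀ j, σ ((List.range (kk j)).map i) ∈ A := by
    intro j
    have h1 : (List.range (kk j)).map i = S j ++ List.replicate (M (S j)) false := by
      rw [htake (j + 1) _ (le_of_lt (hkjlt j))]
      have h2 : List.take (S j ++ List.replicate (M (S j)) false).length ((S j ++ List.replicate (M (S j)) false) ++ [true]) = S j ++ List.replicate (M (S j)) false := List.take_left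
      rw [hSsucc j, ← List.append_assoc]
      have h3 : kk j = (S j ++ List.replicate (M (S j)) false).length := by
        simp [hkk]
      rw [h3]
      exact h2
    rw [h1]
    exact hMspec (S j)
  have hikj : ∀ j, i (kk j) = true := by
    intro j
    rw [← hcoh (j + 1) (kk j) (hkjlt j)]
    rw [hSsucc j, ← List.append_assoc]
    have hlen : (S j ++ List.replicate (M (S j)) false).length = kk j := by
      simp only [List.length_append, List.length_replicate, hkk]
    have hlt : kk j < ((S j ++ List.replicate (M (S j)) false) ++ [true]).length := by
      simp only [List.length_append, List.length_cons, List.length_nil] at *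
      omega
    rw [List.getD_eq_getElem _ _ hlt, List.getElem_append_right (by omega)]
    simp [hlen]
  -- every `true` answer happens at a key position
  have htrue : ∀ J k, k < (S J).length → (S J).getD k false = true →
      ∃ j, k = kk j := by
    intro J
    induction J with
    | zero => intro k hk; simp [hS] at hk
    | succ J ih =>
      intro k hk hkt
      by_cases h1 : k < (S J).length
      · refine ih k h1 ?_
        rw [hcoh J k h1, ← hcoh (J + 1) k hk]
        exact hkt
      · push_neg at h1
        by_cases h2 : k < (S J).length + M (S J)
        · exfalso
          have hfalse : (S (J + 1)).getD k false = false := by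
            rw [hSsucc J, ← List.append_assoc]
            have hklt : k < ((S J ++ List.replicate (M (S J)) false) ++ [true]).length := by
              simp only [List.length_append, List.length_replicate, List.length_cons,
                List.length_nil]
              omega
            have hklt2 : k < (S J ++ List.replicate (M (S J)) false).length := by
              simp only [List.length_append, List.length_replicate]
              omega
            rw [List.getD_eq_getElem _ _ hklt]
            rw [List.getElem_append_left hklt2]
            rw [List.getElem_append_right h1]
            apply List.getElem_replicate
          rw [hfalse] at hkt
          exact Bool.false_ne_true hkt
        · refine ⟨J, ?_⟩
          have h3 := hSlensucc J
          simp only [hkk]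
          omega
  set n : ℕ → ℕ := fun k => σ ((List.range k).map i) with hn
  have hBA : {m | ∃ k, i k = true ∧ n k = m} ⊆ A := by
    rintro m ⟨k, hk, rfl⟩
    have hklen : k < (S (k + 1)).length := lt_of_lt_of_le (Nat.lt_succ_self k) (hSlenle (k + 1))
    obtain ⟨j, rfl⟩ := htrue (k + 1) k hklen (by rw [hcoh (k + 1) k hklen]; exact hk)
    exact hmoves j
  have hkkmono : StrictMono kk := by
    apply strictMono_nat_of_lt_succ
    intro j
    have h1 := hkjlt j
    simp only [hkk] at *
    omega
  have hBinf : {m | ∃ k, i k = true ∧ n k = m}.Infinite := by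
    apply Set.infinite_of_injective_forall_mem (f := fun j => n (kk j))
    · exact fun a b hab => hkkmono.injective ((hσ i).1.injective hab)
    · exact fun j => ⟨kk j, hikj j, rfl⟩
  apply (hσ i).2
  by_cases hr : Set.range n ∈ I
  · exact Or.inl hr
  · exact Or.inr ⟨hr, hBinf, hdown A hAI _ hBA⟩

end Stmt17Aux

theorem stmt17 (I : Set (Set ℕ)) (hI : IsIdealOmega I) :
    ¬ TallStarIWinStrat I ↔
      ∀ X : ℕ → Set ℕ, (∀ n, X n ∉ I) →
        ∃ A ∈ I, ∀ n, (A ∩ X n).Infinite := by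
  constructor
  · intro hns X hXpos
    by_contra hA
    push_neg at hA
    exact hns (Stmt17Aux.winning hI hXpos (fun A hA' => (hA A hA').imp fun n h => Set.not_infinite.mpr h))
  · intro hprop
    exact Stmt17Aux.nostrat hI hprop
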